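/- Let A be a finite set, p and p* probability distributions on A, g : A → [0, H] a function with H ≥ 0, α > 0, and let q be the distribution q(a) ∝ p(a) exp(α g(a)). Then ⟨g, p* − p⟩ ≤ αH²/2 + α⁻¹ (KL(p*‖p) − KL(p*‖q)), where ⟨g, μ⟩ = Σ_a g(a) μ(a). -/

import Mathlib

open Finset

/-- Mirror-descent one-step lemma: for probability distributions `p, p*` on a nonempty
finite set `A` with `p` everywhere positive, a function `g : A → [0, H]`, `α > 0`, and
the exponentially reweighted distribution `q a ∝ p a * exp (α * g a)`, one has
`⟨g, p* - p⟩ ≤ α H² / 2 + α⁻¹ (KL(p* ‖ p) - KL(p* ‖ q))`. -/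
theorem mirror_descent_step {A : Type*} [Fintype A] [Nonempty A]
    (p pstar : A → ℝ) (hp : ∀ a, 0 < p a) (hps : ∀ a, 0 ≤ pstar a)
    (hpsum : ∑ a, p a = 1) (hpssum : ∑ a, pstar a = 1)
    (H : ℝ) (hH : 0 ≤ H) (g : A → ℝ) (hg : ∀ a, g a ∈ Set.Icc 0 H)
    (α : ℝ) (hα : 0 < α)
    (q : A → ℝ)
    (hq : ∀ a, q a = p a * Real.exp (α * g a) / ∑ a', p a' * Real.exp (α * g a')) :
    ∑ a, g a * (pstar a - p a)
      ≤ α * H ^ 2 / 2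
        + α⁻¹ * ((∑ a, pstar a * Real.log (pstar a / p a))
                 - (∑ a, pstar a * Real.log (pstar a / q a))) := by
  set Z : ℝ := ∑ a', p a' * Real.exp (α * g a') with hZ
  have hZpos : 0 < Z := by
    apply Finset.sum_pos
    · intro a _; exact mul_pos (hp a) (Real.exp_pos _)
    · exact univ_nonempty
  -- mean of g under p
  set m : ℝ := ∑ a, p a * g a with hm
  have hm0 : 0 ≤ m := Finset.sum_nonneg fun a _ => mul_nonneg (hp a).le (hg a).1
  have hmH : m ≤ H := by
    calc m ≤ ∑ a, p a * H := Finset.sum_le_sum fun a _ =>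
            mul_le_mul_of_nonneg_left (hg a).2 (hp a).le
    _ = H := by rw [← Finset.sum_mul, hpsum, one_mul]
  -- Case H = 0 handled within the general proof; we prove log Z ≤ α m + α² H²/2.
  have hlogZ : Real.log Z ≤ α * m + α ^ 2 * H ^ 2 / 2 := by
    rcases eq_or_lt_of_le hH with hH0 | hHpos
    · -- H = 0, so g ≡ 0, Z = 1
      have hg0 : ∀ a, g a = 0 := fun a => le_antisymm (hH0 ▸ (hg a).2) (hg a).1
      have : Z = 1 := by
        rw [hZ]
        simp only [hg0, mul_zero, Real.exp_zero, mul_one]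
        exact hpsum
      rw [this, Real.log_one]
      have : m = 0 := by rw [hm]; simp [hg0]
      rw [this]
      positivity
    · -- main case: Hoeffding-type bound with constant 1/2
      have key : Z ≤ Real.exp (α * m) * Real.cosh (α * H) := by
        have hbound : ∀ a, Real.exp (α * (g a - m))
            ≤ ((H - (g a - m)) / (2 * H)) * Real.exp (-(α * H))
              + ((H + (g a - m)) / (2 * H)) * Real.exp (α * H) := by
          intro a
          have hy1 : -H ≤ g a - m := by have := (hg a).1; linarith
          have hy2 : g a - m ≤ H := by have := (hg a).2; linarith
          have ht1 : 0 ≤ (H - (g a - m)) / (2 * H) := by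
            apply div_nonneg <;> linarith
          have ht2 : 0 ≤ (H + (g a - m)) / (2 * H) := by
            apply div_nonneg <;> linarith
          have hts : (H - (g a - m)) / (2 * H) + (H + (g a - m)) / (2 * H) = 1 := by
            field_simp; ring
          have h2H : (2 * H) ≠ 0 := by positivity
          have := convexOn_exp.2 (Set.mem_univ (-(α * H))) (Set.mem_univ (α * H))
            ht1 ht2 hts
          simp only [smul_eq_mul] at this
          have harg : (H - (g a - m)) / (2 * H) * (-(α * H))
              + (H + (g a - m)) / (2 * H) * (α * H) = α * (g a - m) := by
            rw [div_mul_eq_mul_div, div_mul_eq_mul_div, ← add_div,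
              div_eq_iff h2H]
            ring
          rw [harg] at this
          exact this
        have hsum : ∑ a, p a * Real.exp (α * (g a - m))
            ≤ Real.cosh (α * H) := by
          calc ∑ a, p a * Real.exp (α * (g a - m))
              ≤ ∑ a, p a * (((H - (g a - m)) / (2 * H)) * Real.exp (-(α * H))
                + ((H + (g a - m)) / (2 * H)) * Real.exp (α * H)) :=
              Finset.sum_le_sum fun a _ =>
                mul_le_mul_of_nonneg_left (hbound a) (hp a).le
          _ = Real.cosh (α * H) := by
              rw [Real.cosh_eq]
              have expand : ∀ a, p a * (((H - (g a - m)) / (2 * H)) * Real.exp (-(α * H))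
                  + ((H + (g a - m)) / (2 * H)) * Real.exp (α * H))
                  = (Real.exp (-(α * H)) / (2 * H)) * (p a * H - p a * (g a - m))
                    + (Real.exp (α * H) / (2 * H)) * (p a * H + p a * (g a - m)) := by
                intro a; field_simp
              rw [Finset.sum_congr rfl fun a _ => expand a]
              rw [Finset.sum_add_distrib, ← Finset.mul_sum, ← Finset.mul_sum]
              have h1 : ∑ a, (p a * H - p a * (g a - m)) = H := by
                have : ∀ a, p a * H - p a * (g a - m) = p a * H - p a * g a + p a * m := by
                  intro a; ring
                rw [Finset.sum_congr rfl fun a _ => this a]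
                rw [Finset.sum_add_distrib, Finset.sum_sub_distrib,
                  ← Finset.sum_mul, ← Finset.sum_mul, hpsum, ← hm]
                ring
              have h2 : ∑ a, (p a * H + p a * (g a - m)) = H := by
                have : ∀ a, p a * H + p a * (g a - m) = p a * H + p a * g a - p a * m := by
                  intro a; ring
                rw [Finset.sum_congr rfl fun a _ => this a]
                rw [Finset.sum_sub_distrib, Finset.sum_add_distrib,
                  ← Finset.sum_mul, ← Finset.sum_mul, hpsum, ← hm]
                ring
              rw [h1, h2]
              field_simp
              ring
        calc Z = ∑ a, Real.exp (α * m) * (p a * Real.exp (α * (g a - m))) := by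
              apply Finset.sum_congr rfl
              intro a _
              rw [← mul_assoc, mul_comm (Real.exp (α * m)) (p a), mul_assoc,
                ← Real.exp_add]
              ring_nf
        _ = Real.exp (α * m) * ∑ a, p a * Real.exp (α * (g a - m)) := by
              rw [← Finset.mul_sum]
        _ ≤ Real.exp (α * m) * Real.cosh (α * H) :=
              mul_le_mul_of_nonneg_left hsum (Real.exp_pos _).le
      have key2 : Z ≤ Real.exp (α * m + α ^ 2 * H ^ 2 / 2) := by
        calc Z ≤ Real.exp (α * m) * Real.cosh (α * H) := key
        _ ≤ Real.exp (α * m) * Real.exp ((α * H) ^ 2 / 2) :=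
            mul_le_mul_of_nonneg_left (Real.cosh_le_exp_half_sq _) (Real.exp_pos _).le
        _ = Real.exp (α * m + α ^ 2 * H ^ 2 / 2) := by
            rw [← Real.exp_add]; ring_nf
      calc Real.log Z ≤ Real.log (Real.exp (α * m + α ^ 2 * H ^ 2 / 2)) :=
            Real.log_le_log hZpos key2
      _ = α * m + α ^ 2 * H ^ 2 / 2 := Real.log_exp _
  -- KL difference identity
  have hKL : (∑ a, pstar a * Real.log (pstar a / p a))
      - (∑ a, pstar a * Real.log (pstar a / q a))
      = α * (∑ a, pstar a * g a) - Real.log Z := by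
    have : ∀ a, pstar a * Real.log (pstar a / p a) - pstar a * Real.log (pstar a / q a)
        = pstar a * (α * g a - Real.log Z) := by
      intro a
      rcases eq_or_lt_of_le (hps a) with h0 | hpos
      · rw [← h0]; ring
      · have hqa : q a = p a * Real.exp (α * g a) / Z := hq a
        have hqpos : 0 < q a := by
          rw [hqa]; exact div_pos (mul_pos (hp a) (Real.exp_pos _)) hZpos
        rw [Real.log_div (ne_of_gt hpos) (ne_of_gt (hp a)),
          Real.log_div (ne_of_gt hpos) (ne_of_gt hqpos), hqa,
          Real.log_div (mul_pos (hp a) (Real.exp_pos _)).ne' (ne_of_gt hZpos),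
          Real.log_mul (ne_of_gt (hp a)) (Real.exp_ne_zero _), Real.log_exp]
        ring
    calc (∑ a, pstar a * Real.log (pstar a / p a))
        - (∑ a, pstar a * Real.log (pstar a / q a))
        = ∑ a, (pstar a * Real.log (pstar a / p a)
            - pstar a * Real.log (pstar a / q a)) := by
          rw [Finset.sum_sub_distrib]
    _ = ∑ a, pstar a * (α * g a - Real.log Z) := Finset.sum_congr rfl fun a _ => this a
    _ = α * (∑ a, pstar a * g a) - Real.log Z := by
        rw [Finset.sum_congr rfl (fun a _ => by ring :
          ∀ a ∈ univ, pstar a * (α * g a - Real.log Z)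
            = α * (pstar a * g a) - Real.log Z * pstar a)]
        rw [Finset.sum_sub_distrib, ← Finset.mul_sum, ← Finset.mul_sum, hpssum]
        ring
  rw [hKL]
  have hexpand : ∑ a, g a * (pstar a - p a) = (∑ a, pstar a * g a) - m := by
    rw [hm, Finset.sum_congr rfl (fun a _ => by ring :
      ∀ a ∈ univ, g a * (pstar a - p a) = pstar a * g a - p a * g a)]
    rw [Finset.sum_sub_distrib]
  rw [hexpand]
  have h1 : α⁻¹ * (α * (∑ a, pstar a * g a) - Real.log Z)
      = (∑ a, pstar a * g a) - α⁻¹ * Real.log Z := by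
    field_simp
  rw [h1]
  have h2 : α⁻¹ * Real.log Z ≤ m + α * H ^ 2 / 2 := by
    rw [inv_mul_le_iff₀ hα]
    calc Real.log Z ≤ α * m + α ^ 2 * H ^ 2 / 2 := hlogZ
    _ = α * (m + α * H ^ 2 / 2) := by ring
  linarith
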